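/- Let C be a 2×2 diagonalizable, positive stable complex matrix with distinct eigenvalues λ₁ ≠ λ₂ having equal real parts Re λ₁ = Re λ₂ = μ, and normalized eigenvectors v₁, v₂. Set α = |⟨v₁/‖v₁‖, v₂/‖v₂‖⟩|. Then the smallest constant c such that every solution of f' = −Cf satisfies ‖f(t)‖₂ ≤ c e^{−μt} ‖f(0)‖₂ for all t ≥ 0 equals √((1+α)/(1−α)). -/

import Mathlib

open Matrix Complex Finset

lemma sum_sq_eq' (w : Fin 2 → ℂ) : ∑ i, ‖w i‖ ^ 2 = (star w ⬝ᵥ w).re := by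
  simp [dotProduct, Fin.sum_univ_two, ← Complex.normSq_eq_norm_sq, Complex.normSq_apply]

lemma dot_conj_swap' (u v : Fin 2 → ℂ) : star v ⬝ᵥ u = (starRingEnd ℂ) (star u ⬝ᵥ v) := by
  simp [dotProduct, Fin.sum_univ_two]; ring

lemma dot_expand' (a b : ℂ) (v w : Fin 2 → ℂ) :
    star (a•v + b•w) ⬝ᵥ (a•v + b•w) =
      (starRingEnd ℂ) a * a * (star v ⬝ᵥ v) + (starRingEnd ℂ) a * b * (star v ⬝ᵥ w)
      + (starRingEnd ℂ) b * a * (star w ⬝ᵥ v) + (starRingEnd ℂ) b * b * (star w ⬝ᵥ w) := by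
  simp [dotProduct, Fin.sum_univ_two]; ring

lemma unit_dot' (v : Fin 2 → ℂ) (hn : Real.sqrt (∑ i, ‖v i‖ ^ 2) = 1) : star v ⬝ᵥ v = 1 := by
  have hre : (star v ⬝ᵥ v).re = 1 := by
    rw [← sum_sq_eq']
    have h0 : (0:ℝ) ≤ ∑ i, ‖v i‖ ^ 2 := Finset.sum_nonneg fun i _ => sq_nonneg _
    nlinarith [Real.sq_sqrt h0, hn]
  have him : star v ⬝ᵥ v = (starRingEnd ℂ) (star v ⬝ᵥ v) := dot_conj_swap' v v
  apply Complex.ext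
  · simpa using hre
  · have := congrArg Complex.im him
    simp only [Complex.conj_im] at this
    simp; linarith

lemma key_ineq' (α x y r s : ℝ) (hα0 : 0 ≤ α) (hα1 : α < 1)
    (hr : |r| ≤ x*y*α) (hs : |s| ≤ x*y*α) :
    x^2+y^2+2*r ≤ (1+α)/(1-α) * (x^2+y^2+2*s) := by
  have h1 : (0:ℝ) < 1 - α := by linarith
  rw [div_mul_eq_mul_div, le_div_iff₀ h1]
  obtain ⟨hr1, hr2⟩ := abs_le.mp hr
  obtain ⟨hs1, hs2⟩ := abs_le.mp hs
  nlinarith [sq_nonneg (x-y), mul_nonneg hα0 (sq_nonneg (x-y))]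

lemma termDeriv' (lam a : ℂ) (v : Fin 2 → ℂ) (t : ℝ) :
    HasDerivAt (fun t : ℝ => (a * Complex.exp (-lam * t)) • v)
      ((a * (Complex.exp (-lam * t) * -lam)) • v) t := by
  have h1 : HasDerivAt (fun t : ℝ => ((t : ℂ))) 1 t := by
    simpa using (hasDerivAt_id t).ofReal_comp
  have h3 := (((h1.const_mul (-lam)).cexp).const_mul a)
  simpa [mul_comm, mul_assoc, mul_left_comm] using h3.smul_const v

lemma sol_hasDeriv' (C : Matrix (Fin 2) (Fin 2) ℂ) (lam1 lam2 : ℂ) (v1 v2 : Fin 2 → ℂ)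
    (he1 : C.mulVec v1 = lam1 • v1) (he2 : C.mulVec v2 = lam2 • v2) (a b : ℂ) (t : ℝ) :
    HasDerivAt (fun t : ℝ =>
        (a * Complex.exp (-lam1 * t)) • v1 + (b * Complex.exp (-lam2 * t)) • v2)
      (-(C.mulVec ((a * Complex.exp (-lam1 * t)) • v1 + (b * Complex.exp (-lam2 * t)) • v2)))
      t := by
  have := (termDeriv' lam1 a v1 t).add (termDeriv' lam2 b v2 t)
  have hd : -(C.mulVec ((a * Complex.exp (-lam1 * t)) • v1 + (b * Complex.exp (-lam2 * t)) • v2))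
      = (a * (Complex.exp (-lam1 * t) * -lam1)) • v1 + (b * (Complex.exp (-lam2 * t) * -lam2)) • v2 := by
    simp only [Matrix.mulVec_add, Matrix.mulVec_smul, he1, he2]
    module
  rw [hd]; exact this

lemma sol_eq' (C : Matrix (Fin 2) (Fin 2) ℂ) (lam1 lam2 : ℂ) (v1 v2 : Fin 2 → ℂ)
    (he1 : C.mulVec v1 = lam1 • v1) (he2 : C.mulVec v2 = lam2 • v2)
    (a b : ℂ) (f : ℝ → Fin 2 → ℂ)
    (hf : ∀ t, HasDerivAt f (-(C.mulVec (f t))) t)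
    (h0 : f 0 = a • v1 + b • v2) :
    ∀ t : ℝ, 0 ≤ t → f t =
      (a * Complex.exp (-lam1 * t)) • v1 + (b * Complex.exp (-lam2 * t)) • v2 := by
  intro T hT
  set g : ℝ → Fin 2 → ℂ := fun t =>
    (a * Complex.exp (-lam1 * t)) • v1 + (b * Complex.exp (-lam2 * t)) • v2 with hg
  have hg' : ∀ t : ℝ, HasDerivAt g (-(C.mulVec (g t))) t :=
    fun t => sol_hasDeriv' C lam1 lam2 v1 v2 he1 he2 a b t
  set L := (Matrix.mulVecLin (-C)).toContinuousLinearMap with hL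
  have hlip : LipschitzWith ‖L‖₊ (fun x : Fin 2 → ℂ => -(C.mulVec x)) := by
    have := L.lipschitz
    have heq : (fun x : Fin 2 → ℂ => -(C.mulVec x)) = ⇑L := by
      funext x
      simp [hL, Matrix.neg_mulVec]
    rw [heq]; exact this
  have h0' : f 0 = g 0 := by rw [h0]; simp [hg]
  have := ODE_solution_unique (v := fun _ x => -(C.mulVec x)) (K := ‖L‖₊) (a := 0) (b := T)
    (fun _ => hlip)
    (fun t _ => (hf t).continuousAt.continuousWithinAt)
    (fun t _ => (hf t).hasDerivWithinAt)
    (fun t _ => (hg' t).continuousAt.continuousWithinAt)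
    (fun t _ => (hg' t).hasDerivWithinAt)
    h0'
  exact this (Set.mem_Icc.mpr ⟨hT, le_refl T⟩)

lemma norm_formula' (lam1 lam2 : ℂ) (μ : ℝ) (hre1 : lam1.re = μ) (hre2 : lam2.re = μ)
    (v1 v2 : Fin 2 → ℂ) (h11 : star v1 ⬝ᵥ v1 = 1) (h22 : star v2 ⬝ᵥ v2 = 1)
    (a b : ℂ) (t : ℝ) :
    ∑ i, ‖((a * Complex.exp (-lam1*t)) • v1 + (b * Complex.exp (-lam2*t)) • v2) i‖^2
      = Real.exp (-μ*t)^2 * (‖a‖^2 + ‖b‖^2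
        + 2 * ((starRingEnd ℂ) a * b * (star v1 ⬝ᵥ v2)
            * Complex.exp (((lam1.im - lam2.im : ℝ)) * t * Complex.I)).re) := by
  set ω : ℝ := lam1.im - lam2.im with hω
  set γ : ℂ := star v1 ⬝ᵥ v2 with hγ
  set E1 : ℂ := Complex.exp (-lam1*t) with hE1
  set E2 : ℂ := Complex.exp (-lam2*t) with hE2
  have hex : ((Real.exp (-μ*t)^2 : ℝ) : ℂ) = Complex.exp (((-2*μ*t : ℝ) : ℂ)) := by
    have h : Real.exp (-μ*t)^2 = Real.exp (-2*μ*t) := by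
      rw [sq, ← Real.exp_add]; ring_nf
    rw [h, Complex.ofReal_exp]
  have hE11 : (starRingEnd ℂ) E1 * E1 = ((Real.exp (-μ*t)^2 : ℝ) : ℂ) := by
    rw [hex, hE1, ← Complex.exp_conj, ← Complex.exp_add]
    congr 1
    apply Complex.ext <;> simp [hre1] <;> ring
  have hE22 : (starRingEnd ℂ) E2 * E2 = ((Real.exp (-μ*t)^2 : ℝ) : ℂ) := by
    rw [hex, hE2, ← Complex.exp_conj, ← Complex.exp_add]
    congr 1
    apply Complex.ext <;> simp [hre2] <;> ring
  have hE12 : (starRingEnd ℂ) E1 * E2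
      = ((Real.exp (-μ*t)^2 : ℝ) : ℂ) * Complex.exp ((ω : ℝ) * t * Complex.I) := by
    rw [hex, hE1, hE2, ← Complex.exp_conj, ← Complex.exp_add, ← Complex.exp_add]
    congr 1
    apply Complex.ext <;> simp [hre1, hre2, hω] <;> ring
  have hE21 : (starRingEnd ℂ) E2 * E1
      = ((Real.exp (-μ*t)^2 : ℝ) : ℂ)
        * (starRingEnd ℂ) (Complex.exp ((ω : ℝ) * t * Complex.I)) := by
    have h := congrArg (starRingEnd ℂ) hE12
    rw [_root_.map_mul, _root_.map_mul, Complex.conj_conj, Complex.conj_ofReal] at h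
    rw [mul_comm ((starRingEnd ℂ) E2) E1, h]
  have haa : (starRingEnd ℂ) a * a = ((‖a‖^2 : ℝ) : ℂ) := by
    rw [mul_comm, Complex.mul_conj']; norm_cast
  have hbb : (starRingEnd ℂ) b * b = ((‖b‖^2 : ℝ) : ℂ) := by
    rw [mul_comm, Complex.mul_conj']; norm_cast
  have h21 : star v2 ⬝ᵥ v1 = (starRingEnd ℂ) γ := dot_conj_swap' v1 v2
  rw [sum_sq_eq', dot_expand', h11, h22, h21]
  have key : (starRingEnd ℂ) (a * E1) * (a * E1) * 1 + (starRingEnd ℂ) (a * E1) * (b * E2) * γ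
      + (starRingEnd ℂ) (b * E2) * (a * E1) * (starRingEnd ℂ) γ
      + (starRingEnd ℂ) (b * E2) * (b * E2) * 1
      = ((Real.exp (-μ*t)^2 : ℝ) : ℂ) * (((‖a‖^2 : ℝ) : ℂ) + ((‖b‖^2 : ℝ) : ℂ)
        + ((starRingEnd ℂ) a * b * γ * Complex.exp ((ω : ℝ) * t * Complex.I)
          + (starRingEnd ℂ) ((starRingEnd ℂ) a * b * γ
              * Complex.exp ((ω : ℝ) * t * Complex.I)))) := by
    simp only [_root_.map_mul, Complex.conj_conj]
    linear_combination ((starRingEnd ℂ) a * a) * hE11 + ((starRingEnd ℂ) b * b) * hE22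
      + ((starRingEnd ℂ) a * b * γ) * hE12
      + (a * (starRingEnd ℂ) b * (starRingEnd ℂ) γ) * hE21
      + ((Real.exp (-μ*t)^2 : ℝ) : ℂ) * haa + ((Real.exp (-μ*t)^2 : ℝ) : ℂ) * hbb
  rw [key, Complex.add_conj]
  rw [← Complex.ofReal_add, ← Complex.ofReal_add, ← Complex.ofReal_mul, Complex.ofReal_re]

theorem stmt10 (C : Matrix (Fin 2) (Fin 2) ℂ) (lam1 lam2 : ℂ) (v1 v2 : Fin 2 → ℂ)
    (μ α : ℝ)
    (hv1 : v1 ≠ 0) (hv2 : v2 ≠ 0)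
    (he1 : C.mulVec v1 = lam1 • v1) (he2 : C.mulVec v2 = lam2 • v2)
    (hne : lam1 ≠ lam2)
    (hre1 : lam1.re = μ) (hre2 : lam2.re = μ) (hμ : 0 < μ)
    (hn1 : Real.sqrt (∑ i, ‖v1 i‖ ^ 2) = 1) (hn2 : Real.sqrt (∑ i, ‖v2 i‖ ^ 2) = 1)
    (hα : α = ‖star v1 ⬝ᵥ v2‖) :
    IsLeast {c : ℝ |
        ∀ f : ℝ → Fin 2 → ℂ, (∀ t : ℝ, HasDerivAt f (-(C.mulVec (f t))) t) →
          ∀ t : ℝ, 0 ≤ t →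
            Real.sqrt (∑ i, ‖f t i‖ ^ 2) ≤
              c * Real.exp (-μ * t) * Real.sqrt (∑ i, ‖f 0 i‖ ^ 2)}
      (Real.sqrt ((1 + α) / (1 - α))) := by
  have h11 : star v1 ⬝ᵥ v1 = 1 := unit_dot' v1 hn1
  have h22 : star v2 ⬝ᵥ v2 = 1 := unit_dot' v2 hn2
  set γ : ℂ := star v1 ⬝ᵥ v2 with hγ
  have hα0 : 0 ≤ α := hα ▸ norm_nonneg γ
  -- α < 1
  have hα1 : α < 1 := by
    rw [hα]
    set x : EuclideanSpace ℂ (Fin 2) := (WithLp.equiv 2 (Fin 2 → ℂ)).symm v1 with hx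
    set y : EuclideanSpace ℂ (Fin 2) := (WithLp.equiv 2 (Fin 2 → ℂ)).symm v2 with hy
    have hnx : ‖x‖ = 1 := by rw [EuclideanSpace.norm_eq]; exact hn1
    have hny : ‖y‖ = 1 := by rw [EuclideanSpace.norm_eq]; exact hn2
    have hip : (inner ℂ x y : ℂ) = star v1 ⬝ᵥ v2 := by
      rw [PiLp.inner_apply]
      simp [dotProduct, RCLike.inner_apply, hx, hy]
      ring
    have hx0 : x ≠ 0 := fun h => hv1 (by simpa [hx] using congrArg (WithLp.equiv 2 (Fin 2 → ℂ)) h)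
    have hy0 : y ≠ 0 := fun h => hv2 (by simpa [hy] using congrArg (WithLp.equiv 2 (Fin 2 → ℂ)) h)
    rcases lt_or_eq_of_le (norm_inner_le_norm (𝕜 := ℂ) x y) with h | h
    · rw [hγ, ← hip]; rw [hnx, hny, mul_one] at h; exact h
    · exfalso
      rw [norm_inner_eq_norm_iff hx0 hy0] at h
      obtain ⟨r, hr0, hr⟩ := h
      have hr' : v2 = r • v1 := congrArg (WithLp.equiv 2 (Fin 2 → ℂ)) hr
      have hcv : C.mulVec v2 = (r * lam1) • v1 := by
        rw [hr', Matrix.mulVec_smul, he1, smul_smul]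
      rw [he2, hr', smul_smul] at hcv
      have h2 : (lam2 * r - r * lam1) • v1 = 0 := by rw [sub_smul, hcv, sub_self]
      rcases smul_eq_zero.mp h2 with h3 | h3
      · apply hne
        have h4 : r * lam1 = r * lam2 := by linear_combination -h3
        exact mul_left_cancel₀ hr0 h4
      · exact hv1 h3
  have h1α : (0:ℝ) < 1 - α := by linarith
  set ω : ℝ := lam1.im - lam2.im with hω
  have hω0 : ω ≠ 0 := by
    intro h
    apply hne
    apply Complex.ext
    · rw [hre1, hre2]
    · rw [hω] at h; linarith [h]
  -- bound for the cross term
  have hcross : ∀ (a b : ℂ) (t : ℝ),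
      |((starRingEnd ℂ) a * b * γ * Complex.exp ((ω : ℝ) * t * Complex.I)).re| ≤ ‖a‖ * ‖b‖ * α := by
    intro a b t
    calc |((starRingEnd ℂ) a * b * γ * Complex.exp ((ω : ℝ) * t * Complex.I)).re|
        ≤ ‖(starRingEnd ℂ) a * b * γ * Complex.exp ((ω : ℝ) * t * Complex.I)‖ :=
          Complex.abs_re_le_norm _
      _ = ‖a‖ * ‖b‖ * α := by
          rw [norm_mul, norm_mul, norm_mul]
          have h1 : ‖Complex.exp ((ω : ℝ) * t * Complex.I)‖ = 1 := by
            rw [Complex.norm_exp]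
            simp
          rw [h1, RCLike.norm_conj, hα]
          ring
  constructor
  · -- membership
    intro f hf t ht
    -- decompose f 0
    have li : LinearIndependent ℂ ![v1, v2] := by
      apply Module.End.eigenvectors_linearIndependent' (Matrix.mulVecLin C) ![lam1, lam2]
      · intro i j hij
        fin_cases i <;> fin_cases j <;> simp_all
      · intro i
        fin_cases i <;>
          refine ⟨?_, by assumption⟩ <;>
          rw [Module.End.mem_eigenspace_iff] <;> simpa [he1, he2]
    have hcard : Fintype.card (Fin 2) = Module.finrank ℂ (Fin 2 → ℂ) := by simp
    have hsp := li.span_eq_top_of_card_eq_finrank hcard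
    have hx : f 0 ∈ Submodule.span ℂ (Set.range ![v1, v2]) := by rw [hsp]; trivial
    rw [Submodule.mem_span_range_iff_exists_fun ℂ] at hx
    obtain ⟨cc, hc⟩ := hx
    obtain ⟨a, b, hab⟩ : ∃ a b : ℂ, f 0 = a • v1 + b • v2 :=
      ⟨cc 0, cc 1, by rw [← hc]; simp [Fin.sum_univ_two]⟩
    have hfeq := sol_eq' C lam1 lam2 v1 v2 he1 he2 a b f hf hab
    have hft := hfeq t ht
    have hf0 := hfeq 0 (le_refl 0)
    rw [hft, hf0, norm_formula' lam1 lam2 μ hre1 hre2 v1 v2 h11 h22 a b t,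
      norm_formula' lam1 lam2 μ hre1 hre2 v1 v2 h11 h22 a b 0]
    set R : ℝ → ℝ := fun t =>
      ((starRingEnd ℂ) a * b * γ * Complex.exp ((ω : ℝ) * t * Complex.I)).re with hR
    have hGt : ‖a‖^2 + ‖b‖^2 + 2 * R t ≤ (1+α)/(1-α) * (‖a‖^2 + ‖b‖^2 + 2 * R 0) :=
      key_ineq' α ‖a‖ ‖b‖ (R t) (R 0) hα0 hα1 (hcross a b t) (hcross a b 0)
    have hG0 : 0 ≤ ‖a‖^2 + ‖b‖^2 + 2 * R 0 := by
      have := abs_le.mp (hcross a b 0)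
      nlinarith [sq_nonneg (‖a‖ - ‖b‖), mul_nonneg (mul_nonneg (norm_nonneg a) (norm_nonneg b)) hα0]
    have hexp : (0:ℝ) < Real.exp (-μ*t) := Real.exp_pos _
    rw [Real.sqrt_mul (sq_nonneg _), Real.sqrt_mul (sq_nonneg _),
      Real.sqrt_sq hexp.le, Real.sqrt_sq (Real.exp_pos (-μ*0)).le]
    have hsq : Real.sqrt (‖a‖^2 + ‖b‖^2 + 2 * R t)
        ≤ Real.sqrt ((1+α)/(1-α)) * Real.sqrt (‖a‖^2 + ‖b‖^2 + 2 * R 0) := by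
      rw [← Real.sqrt_mul (by positivity)]
      exact Real.sqrt_le_sqrt hGt
    calc Real.exp (-μ*t) * Real.sqrt (‖a‖^2 + ‖b‖^2 + 2 * R t)
        ≤ Real.exp (-μ*t) * (Real.sqrt ((1+α)/(1-α)) * Real.sqrt (‖a‖^2 + ‖b‖^2 + 2 * R 0)) :=
          by exact mul_le_mul_of_nonneg_left hsq hexp.le
      _ = Real.sqrt ((1+α)/(1-α)) * Real.exp (-μ*t)
            * (Real.exp (-μ*0) * Real.sqrt (‖a‖^2 + ‖b‖^2 + 2 * R 0)) := by
          simp [Real.exp_zero]; ring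
  · -- lower bound
    intro c hc
    set b : ℂ := if h : α = 0 then 1 else -((starRingEnd ℂ) γ) / (α : ℂ) with hb
    have hbγ : b * γ = -(α : ℂ) := by
      by_cases h : α = 0
      · have hγ0 : γ = 0 := by
          rw [← norm_eq_zero, ← hα, h]
        simp [hb, h, hγ0]
      · rw [hb]
        simp only [h, dite_false]
        have hα' : (α : ℂ) ≠ 0 := by exact_mod_cast h
        field_simp
        rw [mul_comm ((starRingEnd ℂ) γ) γ, Complex.mul_conj']
        norm_cast
        rw [← hα]
    have hbn : ‖b‖ = 1 := by
      by_cases h : α = 0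
      · simp [hb, h]
      · rw [hb]
        simp only [h, dite_false]
        rw [norm_div, norm_neg, RCLike.norm_conj]
        rw [Complex.norm_real, Real.norm_eq_abs, _root_.abs_of_nonneg hα0, ← hα]
        field_simp
    set g : ℝ → Fin 2 → ℂ := fun t =>
      ((1:ℂ) * Complex.exp (-lam1 * t)) • v1 + (b * Complex.exp (-lam2 * t)) • v2 with hg
    have hg' : ∀ t : ℝ, HasDerivAt g (-(C.mulVec (g t))) t :=
      fun t => sol_hasDeriv' C lam1 lam2 v1 v2 he1 he2 1 b t
    set T : ℝ := Real.pi / |ω| with hT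
    have hT0 : 0 ≤ T := by positivity
    have hcT := hc g hg' T hT0
    have hcos : Complex.exp ((ω : ℝ) * T * Complex.I) = -1 := by
      have hωT : ω * T = Real.pi ∨ ω * T = -Real.pi := by
        rcases abs_cases ω with ⟨h1, _⟩ | ⟨h1, _⟩
        · left; rw [hT, h1]; field_simp
        · right; rw [hT, h1]
          have hn : -ω ≠ 0 := neg_ne_zero.mpr hω0
          field_simp
      rw [← Complex.ofReal_mul]
      rcases hωT with h | h
      · rw [h, Complex.exp_pi_mul_I]
      · rw [h]
        push_cast
        rw [neg_mul, Complex.exp_neg, Complex.exp_pi_mul_I]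
        norm_num
    have hGT : ∑ i, ‖g T i‖^2 = Real.exp (-μ*T)^2 * (2 + 2*α) := by
      rw [hg]
      rw [norm_formula' lam1 lam2 μ hre1 hre2 v1 v2 h11 h22 1 b T]
      rw [← hω, hcos, ← hγ]
      simp only [_root_.map_one, one_mul, norm_one]
      rw [hbγ]
      congr 1
      simp [hbn]
      ring
    have hG0 : ∑ i, ‖g 0 i‖^2 = 2 - 2*α := by
      rw [hg]
      rw [norm_formula' lam1 lam2 μ hre1 hre2 v1 v2 h11 h22 1 b 0]
      rw [← hγ]
      simp only [Complex.ofReal_zero, mul_zero, zero_mul, Complex.exp_zero, mul_one,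
        _root_.map_one, one_mul, norm_one]
      rw [hbγ]
      simp [hbn]
      ring
    rw [hGT, hG0] at hcT
    have hexp : (0:ℝ) < Real.exp (-μ*T) := Real.exp_pos _
    rw [Real.sqrt_mul (sq_nonneg _), Real.sqrt_sq hexp.le] at hcT
    have h2α : (0:ℝ) < 2 - 2*α := by linarith
    have hstep : Real.sqrt (2 + 2*α) ≤ c * Real.sqrt (2 - 2*α) := by
      have := hcT
      rw [mul_comm c (Real.exp (-μ*T)), mul_assoc] at this
      exact le_of_mul_le_mul_left this hexp
    have hfrac : (1+α)/(1-α) = (2+2*α)/(2-2*α) := by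
      field_simp
    have hdiv : Real.sqrt ((1+α)/(1-α)) = Real.sqrt (2+2*α) / Real.sqrt (2-2*α) := by
      rw [hfrac, Real.sqrt_div (by linarith : (0:ℝ) ≤ 2+2*α)]
    rw [hdiv, div_le_iff₀ (Real.sqrt_pos.mpr h2α)]
    exact hstep
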